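/- A closed subspace S of H is A-compatible (i.e. there exists an idempotent Q with range S and Q*A = AQ) if and only if S equals the intersection of H with the L-closure of S and the orthogonal projection P onto the L-closure of S satisfies P(H) ⊆ H, where L is the completion of H with respect to the A-inner product. -/
import Mathlib


open ContinuousLinearMap
open scoped InnerProductSpace

/-- A closed subspace `S ⊆ H` is `A`-compatible (there is an idempotent `Q` with range `S`
and `Q* A = A Q`) if and only if `S` equals the intersection of `H` with the `L`-closure of
`S`, and the orthogonal projection onto the `L`-closure of `S` maps `H` into `H`. Here `L`
is the completion of `H` under the `A`-inner product, realized by a dense embedding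
`e : H → L` with `⟪e f, e g⟫ = ⟨A f, g⟩`. The condition that the orthogonal projection of
`e f` onto the closure of `e '' S` again lies in `e '' H` is expressed by the existence of
`g : H` with `e g` in the closure and `e f - e g` orthogonal to the closure. -/
theorem compatible_iff_projection_preserves_H
    {H L : Type*} [NormedAddCommGroup H] [InnerProductSpace ℂ H] [CompleteSpace H]
    [NormedAddCommGroup L] [InnerProductSpace ℂ L] [CompleteSpace L]
    (A : H →L[ℂ] H) (hA : A.IsPositive) (hAinj : Function.Injective A)
    (e : H →ₗ[ℂ] L) (hDense : DenseRange e)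
    (hInner : ∀ f g : H, ⟪e f, e g⟫_ℂ = ⟪A f, g⟫_ℂ)
    (S : Submodule ℂ H) (hS : IsClosed (S : Set H)) :
    (∃ Q : H →L[ℂ] H, Q ∘L Q = Q ∧ Set.range Q = (S : Set H) ∧
        (adjoint Q) ∘L A = A ∘L Q) ↔
      (e ⁻¹' closure (e '' (S : Set H)) = (S : Set H) ∧
        ∀ f : H, ∃ g : H, e g ∈ closure (e '' (S : Set H)) ∧
          ∀ s ∈ closure (e '' (S : Set H)), ⟪e f - e g, s⟫_ℂ = 0) := by
  -- `e` is injective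
  have einj : Function.Injective e := by
    intro a b hab
    have h0 : A (a - b) = 0 := by
      have h1 : ⟪A (a - b), A (a - b)⟫_ℂ = 0 := by
        rw [← hInner, map_sub, hab, sub_self, inner_zero_left]
      exact inner_self_eq_zero.mp h1
    exact sub_eq_zero.mp (hAinj (h0.trans (map_zero A).symm))
  -- the closure of the image of `S`, as a closed submodule of `L`
  set M : Submodule ℂ L := (S.map e).topologicalClosure with hMdef
  have hMc : closure (e '' (S : Set H)) = (M : Set L) := by
    rw [hMdef, Submodule.topologicalClosure_coe, Submodule.map_coe]
  have hMclosed : IsClosed (M : Set L) := Submodule.isClosed_topologicalClosure _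
  have heSM : ∀ s ∈ S, e s ∈ M :=
    fun s hs => Submodule.le_topologicalClosure _ (Submodule.mem_map_of_mem hs)
  -- `e` is continuous
  have ebound : ∀ x : H, ‖e x‖ ≤ Real.sqrt ‖A‖ * ‖x‖ := by
    intro x
    have h1 : ‖e x‖ ^ 2 ≤ ‖A‖ * ‖x‖ ^ 2 := by
      have h2 : (‖e x‖ : ℝ) ^ 2 = RCLike.re ⟪e x, e x⟫_ℂ := by
        rw [inner_self_eq_norm_sq]
      rw [h2, hInner]
      calc RCLike.re ⟪A x, x⟫_ℂ ≤ ‖⟪A x, x⟫_ℂ‖ := by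
            simpa using RCLike.re_le_norm (⟪A x, x⟫_ℂ)
        _ ≤ ‖A x‖ * ‖x‖ := norm_inner_le_norm _ _
        _ ≤ (‖A‖ * ‖x‖) * ‖x‖ := by
            have := A.le_opNorm x
            nlinarith [norm_nonneg x]
        _ = ‖A‖ * ‖x‖ ^ 2 := by ring
    have h3 := Real.sqrt_le_sqrt h1
    rwa [Real.sqrt_sq (norm_nonneg _), Real.sqrt_mul (norm_nonneg _),
      Real.sqrt_sq (norm_nonneg _)] at h3
  have econt : Continuous e := (e.mkContinuous _ ebound).continuous
  simp only [hMc]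
  constructor
  · rintro ⟨Q, hQQ, hrange, hadj⟩
    have hQidem : ∀ f, Q (Q f) = Q f := fun f => by
      have := congrArg (fun T : H →L[ℂ] H => T f) hQQ
      simpa using this
    have hQS : ∀ f, Q f ∈ S := fun f => by
      rw [← SetLike.mem_coe, ← hrange]; exact ⟨f, rfl⟩
    -- orthogonality of `e f - e (Q f)` to `M`
    have horth : ∀ f : H, ∀ s ∈ M, ⟪e f - e (Q f), s⟫_ℂ = 0 := by
      intro f
      have hbase : ∀ s ∈ e '' (S : Set H), ⟪e f - e (Q f), s⟫_ℂ = 0 := by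
        rintro _ ⟨s', hs', rfl⟩
        obtain ⟨t, rfl⟩ : s' ∈ Set.range Q := by rw [hrange]; exact hs'
        have h1 : ⟪e f - e (Q f), e (Q t)⟫_ℂ = ⟪A (f - Q f), Q t⟫_ℂ := by
          rw [← hInner, map_sub]
        rw [h1, ← adjoint_inner_left]
        have h2 : adjoint Q (A (f - Q f)) = A (Q (f - Q f)) := by
          have := congrArg (fun T : H →L[ℂ] H => T (f - Q f)) hadj
          simpa using this
        rw [h2, map_sub, hQidem, sub_self, map_zero, inner_zero_left]
      intro s hs
      have hcl : IsClosed {s : L | ⟪e f - e (Q f), s⟫_ℂ = 0} :=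
        isClosed_eq (Continuous.inner continuous_const continuous_id) continuous_const
      have : closure (e '' (S : Set H)) ⊆ {s : L | ⟪e f - e (Q f), s⟫_ℂ = 0} :=
        closure_minimal hbase hcl
      exact this (by rw [hMc]; exact hs)
    constructor
    · ext f
      simp only [Set.mem_preimage, SetLike.mem_coe]
      constructor
      · intro hf
        have hv : e f - e (Q f) ∈ M := M.sub_mem hf (heSM _ (hQS f))
        have h0 : e f - e (Q f) = 0 :=
          inner_self_eq_zero.mp (horth f _ hv)
        have : f = Q f := einj (sub_eq_zero.mp h0)
        rw [this]; exact hQS f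
      · intro hf
        exact heSM f hf
    · intro f
      exact ⟨Q f, heSM _ (hQS f), horth f⟩
  · rintro ⟨h1, h2⟩
    -- uniqueness of the projection element
    have uniq : ∀ f g₁ g₂ : H,
        (e g₁ ∈ M ∧ ∀ s ∈ M, ⟪e f - e g₁, s⟫_ℂ = 0) →
        (e g₂ ∈ M ∧ ∀ s ∈ M, ⟪e f - e g₂, s⟫_ℂ = 0) → g₁ = g₂ := by
      intro f g₁ g₂ hg₁ hg₂
      have hv : e g₁ - e g₂ ∈ M := M.sub_mem hg₁.1 hg₂.1
      have hz : ⟪e g₁ - e g₂, e g₁ - e g₂⟫_ℂ = 0 := by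
        have key : ⟪e g₁ - e g₂, e g₁ - e g₂⟫_ℂ =
            ⟪e f - e g₂, e g₁ - e g₂⟫_ℂ - ⟪e f - e g₁, e g₁ - e g₂⟫_ℂ := by
          rw [← inner_sub_left]; congr 1; abel
        rw [key, hg₂.2 _ hv, hg₁.2 _ hv, sub_zero]
      exact einj (sub_eq_zero.mp (inner_self_eq_zero.mp hz))
    choose g hg using h2
    -- `g` is linear
    have gadd : ∀ a b : H, g (a + b) = g a + g b := by
      intro a b
      refine (uniq (a + b) (g a + g b) (g (a + b)) ⟨?_, ?_⟩ (hg (a + b))).symm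
      · rw [map_add]; exact M.add_mem (hg a).1 (hg b).1
      intro s hs
      have key : e (a + b) - e (g a + g b) = (e a - e (g a)) + (e b - e (g b)) := by
        rw [map_add, map_add]; abel
      rw [key, inner_add_left, (hg a).2 s hs, (hg b).2 s hs, add_zero]
    have gsmul : ∀ (c : ℂ) (a : H), g (c • a) = c • g a := by
      intro c a
      refine (uniq (c • a) (c • g a) (g (c • a)) ⟨?_, ?_⟩ (hg (c • a))).symm
      · rw [map_smul]; exact M.smul_mem c (hg a).1
      intro s hs
      have key : e (c • a) - e (c • g a) = c • (e a - e (g a)) := by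
        rw [map_smul, map_smul, smul_sub]
      rw [key, inner_smul_left, (hg a).2 s hs, mul_zero]
    let Q₀ : H →ₗ[ℂ] H :=
      { toFun := g, map_add' := gadd, map_smul' := gsmul }
    have hcont : Continuous Q₀ := by
      apply Q₀.continuous_of_seq_closed_graph
      intro u x y hux huy
      refine uniq x y (g x) ?_ (hg x)
      constructor
      · have htend : Filter.Tendsto (fun n => e (g (u n))) Filter.atTop (nhds (e y)) :=
          (econt.tendsto y).comp huy
        exact hMclosed.mem_of_tendsto htend
          (Filter.Eventually.of_forall fun n => (hg (u n)).1)
      · intro s hs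
        have htend : Filter.Tendsto (fun n => ⟪e (u n) - e (g (u n)), s⟫_ℂ)
            Filter.atTop (nhds ⟪e x - e y, s⟫_ℂ) := by
          apply Filter.Tendsto.inner _ tendsto_const_nhds
          exact (((econt.tendsto x).comp hux).sub ((econt.tendsto y).comp huy))
        have hconst : (fun n => ⟪e (u n) - e (g (u n)), s⟫_ℂ) = fun _ => 0 := by
          funext n; exact (hg (u n)).2 s hs
        rw [hconst] at htend
        exact tendsto_nhds_unique htend tendsto_const_nhds
    refine ⟨⟨Q₀, hcont⟩, ?_, ?_, ?_⟩
    · ext f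
      show g (g f) = g f
      refine uniq (g f) _ _ ?_ ⟨(hg f).1, ?_⟩
      · exact hg (g f)
      · intro s hs; rw [sub_self, inner_zero_left]
    · ext f
      simp only [Set.mem_range, SetLike.mem_coe]
      constructor
      · rintro ⟨x, rfl⟩
        show g x ∈ S
        have : g x ∈ e ⁻¹' (M : Set L) := (hg x).1
        rw [h1] at this; exact this
      · intro hf
        refine ⟨f, ?_⟩
        show g f = f
        exact uniq f _ _ (hg f) ⟨heSM f hf, fun s hs => by rw [sub_self, inner_zero_left]⟩
    · ext x
      apply ext_inner_right ℂ
      intro y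
      show ⟪adjoint ⟨Q₀, hcont⟩ (A x), y⟫_ℂ = ⟪A (g x), y⟫_ℂ
      rw [adjoint_inner_left]
      show ⟪A x, g y⟫_ℂ = ⟪A (g x), y⟫_ℂ
      rw [← hInner, ← hInner]
      have h3 : ⟪e x - e (g x), e (g y)⟫_ℂ = 0 := (hg x).2 _ (hg y).1
      have h4 : ⟪e (g x), e y - e (g y)⟫_ℂ = 0 := by
        rw [← inner_conj_symm, (hg y).2 _ (hg x).1, map_zero]
      rw [inner_sub_left] at h3
      rw [inner_sub_right] at h4
      have h5 : ⟪e x, e (g y)⟫_ℂ = ⟪e (g x), e (g y)⟫_ℂ := by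
        linear_combination h3
      have h6 : ⟪e (g x), e y⟫_ℂ = ⟪e (g x), e (g y)⟫_ℂ := by
        linear_combination h4
      rw [h5, h6]
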